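/- Let z₁, z₂, ζ_α, ζ_β ∈ ℂ be pairwise distinct, L₀ an invertible n×n complex matrix, a₁, a₂, c_α, c_β ∈ ℂⁿ and b₁†, b₂†, d_α†, d_β† row vectors with d_α†a₁ ≠ 0, b₂†c_β ≠ 0 and b₂† ≠ 0. Define L(z) = L₀ + a₁b₁†/(z − z₁) + a₂b₂†/(z − z₂), M(z) = L₀⁻¹ − c_αd_α†/(z − ζ_α) − c_βd_β†/(z − ζ_β), B₁(z) = I + ((z₁ − ζ_α)/(z − z₁))·(L₀⁻¹a₁)(d_α†L₀)/(d_α†a₁), B₂(z) = I + ((z₂ − ζ_β)/(z − z₂))·(c_β b₂†)/(b₂†c_β). Assume L(z) = L₀·B₁(z)·B₂(z) for all z ∉ {z₁, z₂}, and L(z)·M(z) = M(z)·L(z) = I for all z ∉ {z₁, z₂, ζ_α, ζ_β}. If c_β ≠ 0, then there exists t ∈ ℂ such that d_β†·L₀·B₁(ζ_β) = t·b₂†; that is, d_β†·L₀·B₁(ζ_β) is proportional to b₂†. -/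

import Mathlib

open Matrix Filter Topology

private lemma aux_vecMul_vecMulVec {n : ℕ} (v a b : Fin n → ℂ) :
    v ᵥ* vecMulVec a b = (v ⬝ᵥ a) • b := by
  funext j
  simp [Matrix.vecMul, Matrix.vecMulVec, dotProduct, Finset.sum_mul, mul_assoc]

private lemma aux_vecMul_smulMat {n : ℕ} (s : ℂ) (v : Fin n → ℂ)
    (A : Matrix (Fin n) (Fin n) ℂ) : v ᵥ* (s • A) = s • (v ᵥ* A) := by
  funext j
  simp [Matrix.vecMul, dotProduct, Finset.mul_sum, mul_left_comm]

/-- For a quadratic Lax matrix with inverse `M(z)` in additive form and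
factorization `L(z) = L₀·B₁(z)·B₂(z)`, one has `d_β†·L₀·B₁(ζ_β) ∼ b₂†`. -/
theorem quadratic_lax_dβ_relation (n : ℕ) (z₁ z₂ ζα ζβ : ℂ)
    (hdist : ([z₁, z₂, ζα, ζβ] : List ℂ).Pairwise (· ≠ ·))
    (L₀ : Matrix (Fin n) (Fin n) ℂ) (hL₀ : IsUnit L₀)
    (a₁ a₂ cα cβ b₁ b₂ dα dβ : Fin n → ℂ)
    (hda : dα ⬝ᵥ a₁ ≠ 0) (hbc : b₂ ⬝ᵥ cβ ≠ 0) (hb₂ : b₂ ≠ 0)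
    (L M : ℂ → Matrix (Fin n) (Fin n) ℂ)
    (hL : ∀ z, L z = L₀ + (z - z₁)⁻¹ • vecMulVec a₁ b₁ +
        (z - z₂)⁻¹ • vecMulVec a₂ b₂)
    (hM : ∀ z, M z = L₀⁻¹ - (z - ζα)⁻¹ • vecMulVec cα dα -
        (z - ζβ)⁻¹ • vecMulVec cβ dβ)
    (B₁ B₂ : ℂ → Matrix (Fin n) (Fin n) ℂ)
    (hB₁ : ∀ z, B₁ z = 1 + (((z₁ - ζα) / (z - z₁)) / (dα ⬝ᵥ a₁)) •
        vecMulVec (L₀⁻¹.mulVec a₁) (Matrix.vecMul dα L₀))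
    (hB₂ : ∀ z, B₂ z = 1 + (((z₂ - ζβ) / (z - z₂)) / (b₂ ⬝ᵥ cβ)) •
        vecMulVec cβ b₂)
    (hfact : ∀ z, z ≠ z₁ → z ≠ z₂ → L z = L₀ * B₁ z * B₂ z)
    (hinv : ∀ z, z ≠ z₁ → z ≠ z₂ → z ≠ ζα → z ≠ ζβ →
      L z * M z = 1 ∧ M z * L z = 1)
    (hcβ : cβ ≠ 0) :
    ∃ t : ℂ, Matrix.vecMul (Matrix.vecMul dβ L₀) (B₁ ζβ) = t • b₂ := by
  classical
  simp only [List.pairwise_cons, List.mem_cons, List.not_mem_nil, List.mem_singleton,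
    forall_eq_or_imp, forall_eq, List.Pairwise.nil, and_true] at hdist
  obtain ⟨⟨h12, h1α, h1β, -⟩, ⟨h2α, h2β, -⟩, ⟨hαβ, -⟩, -⟩ := hdist
  have hβ1 : ζβ ≠ z₁ := h1β.symm
  have hβ2 : ζβ ≠ z₂ := h2β.symm
  have hβα : ζβ ≠ ζα := hαβ.symm
  obtain ⟨i, hi⟩ := Function.ne_iff.mp hcβ
  simp only [Pi.zero_apply] at hi
  set N : ℂ → Matrix (Fin n) (Fin n) ℂ :=
    fun z => L₀⁻¹ - (z - ζα)⁻¹ • vecMulVec cα dα with hN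
  -- key algebraic identity away from poles
  have key : ∀ z, z ≠ z₁ → z ≠ z₂ → z ≠ ζα → z ≠ ζβ →
      vecMulVec cβ dβ * L z = (z - ζβ) • (N z * L z - 1) := by
    intro z hz1 hz2 hzα hzβ
    have h := (hinv z hz1 hz2 hzα hzβ).2
    rw [hM z] at h
    have hne : z - ζβ ≠ 0 := sub_ne_zero.mpr hzβ
    have h1 : N z * L z - (z - ζβ)⁻¹ • (vecMulVec cβ dβ * L z) = 1 := by
      rw [← h, hN]
      simp [Matrix.sub_mul, Matrix.smul_mul]
    have h2 : (z - ζβ)⁻¹ • (vecMulVec cβ dβ * L z) = N z * L z - 1 := by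
      rw [← h1]; abel
    calc vecMulVec cβ dβ * L z
        = (z - ζβ) • ((z - ζβ)⁻¹ • (vecMulVec cβ dβ * L z)) := by
          rw [smul_smul, mul_inv_cancel₀ hne, one_smul]
      _ = (z - ζβ) • (N z * L z - 1) := by rw [h2]
  -- the residue of M·L at ζβ vanishes : dβ ᵥ* L ζβ = 0
  have hWL : dβ ᵥ* (L ζβ) = 0 := by
    funext j
    have cinv1 : ContinuousAt (fun z : ℂ => (z - z₁)⁻¹) ζβ :=
      (continuousAt_id.sub continuousAt_const).inv₀ (sub_ne_zero.mpr hβ1)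
    have cinv2 : ContinuousAt (fun z : ℂ => (z - z₂)⁻¹) ζβ :=
      (continuousAt_id.sub continuousAt_const).inv₀ (sub_ne_zero.mpr hβ2)
    have cinvα : ContinuousAt (fun z : ℂ => (z - ζα)⁻¹) ζβ :=
      (continuousAt_id.sub continuousAt_const).inv₀ (sub_ne_zero.mpr hβα)
    have cL : ContinuousAt L ζβ := by
      have : ContinuousAt (fun z : ℂ => L₀ + (z - z₁)⁻¹ • vecMulVec a₁ b₁ +
          (z - z₂)⁻¹ • vecMulVec a₂ b₂) ζβ :=
        (continuousAt_const.add (cinv1.smul continuousAt_const)).add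
          (cinv2.smul continuousAt_const)
      have hfun : L = fun z => L₀ + (z - z₁)⁻¹ • vecMulVec a₁ b₁ +
          (z - z₂)⁻¹ • vecMulVec a₂ b₂ := funext hL
      rw [hfun]; exact this
    have cN : ContinuousAt N ζβ := by
      exact continuousAt_const.sub (cinvα.smul continuousAt_const)
    have cNL : ContinuousAt (fun z => N z * L z - 1) ζβ :=
      (cN.mul cL).sub continuousAt_const
    have centryi : ContinuousAt (fun z => (N z * L z - 1) i) ζβ :=
      (continuous_apply i).continuousAt.comp cNL
    have centry : ContinuousAt (fun z => (N z * L z - 1) i j) ζβ :=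
      (continuous_apply j).continuousAt.comp centryi
    have cf : ContinuousAt (fun z => cβ i * (dβ ᵥ* (L z)) j) ζβ := by
      have : ContinuousAt (fun z => (L z) ) ζβ := cL
      have cvm : ContinuousAt (fun z => (dβ ᵥ* (L z)) j) ζβ := by
        have : (fun z => (dβ ᵥ* (L z)) j) = fun z => ∑ k, dβ k * L z k j := by
          funext z; simp [Matrix.vecMul, dotProduct]
        rw [this]
        apply (tendsto_finset_sum _ fun k _ => ?_)
        have cLk : ContinuousAt (fun z => L z k) ζβ :=
          (continuous_apply k).continuousAt.comp cL
        have cLkj : ContinuousAt (fun z => L z k j) ζβ :=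
          (continuous_apply j).continuousAt.comp cLk
        exact continuousAt_const.mul cLkj
      exact continuousAt_const.mul cvm
    -- eventual equality on 𝓝[≠] ζβ
    have hev : ∀ᶠ z in 𝓝[≠] ζβ,
        cβ i * (dβ ᵥ* (L z)) j = (z - ζβ) * ((N z * L z - 1) i j) := by
      have e1 : ∀ᶠ z in 𝓝[≠] ζβ, z ≠ z₁ :=
        (eventually_ne_nhds hβ1).filter_mono nhdsWithin_le_nhds
      have e2 : ∀ᶠ z in 𝓝[≠] ζβ, z ≠ z₂ :=
        (eventually_ne_nhds hβ2).filter_mono nhdsWithin_le_nhds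
      have e3 : ∀ᶠ z in 𝓝[≠] ζβ, z ≠ ζα :=
        (eventually_ne_nhds hβα).filter_mono nhdsWithin_le_nhds
      have e4 : ∀ᶠ z in 𝓝[≠] ζβ, z ≠ ζβ := eventually_mem_nhdsWithin
      filter_upwards [e1, e2, e3, e4] with z hz1 hz2 hz3 hz4
      have hk := congrFun (congrFun (key z hz1 hz2 hz3 hz4) i) j
      have hl : (vecMulVec cβ dβ * L z) i j = cβ i * (dβ ᵥ* (L z)) j := by
        simp [Matrix.mul_apply, Matrix.vecMulVec_apply, Matrix.vecMul, dotProduct,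
          Finset.mul_sum, mul_assoc]
      have hr : ((z - ζβ) • (N z * L z - 1)) i j = (z - ζβ) * ((N z * L z - 1) i j) := rfl
      rw [hl, hr] at hk
      exact hk
    -- take limits
    have t1 : Tendsto (fun z => cβ i * (dβ ᵥ* (L z)) j) (𝓝[≠] ζβ)
        (𝓝 (cβ i * (dβ ᵥ* (L ζβ)) j)) := cf.continuousWithinAt.tendsto
    have t2 : Tendsto (fun z => (z - ζβ) * ((N z * L z - 1) i j)) (𝓝[≠] ζβ)
        (𝓝 (0 * ((N ζβ * L ζβ - 1) i j))) := by
      have ha : Tendsto (fun z : ℂ => z - ζβ) (𝓝 ζβ) (𝓝 0) := by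
        have := (continuousAt_id.sub (continuousAt_const : ContinuousAt (fun _ : ℂ => ζβ) ζβ))
        simpa [Pi.sub_def] using this.tendsto
      exact ((ha.mono_left nhdsWithin_le_nhds).mul
        (centry.continuousWithinAt.tendsto))
    have := tendsto_nhds_unique_of_eventuallyEq t1 t2 hev
    rw [zero_mul] at this
    have hz : (dβ ᵥ* (L ζβ)) j = 0 := by
      rcases mul_eq_zero.mp this with h | h
      · exact absurd h hi
      · exact h
    simpa using hz
  -- use the factorization
  have hfβ := hfact ζβ hβ1 hβ2
  rw [hfβ] at hWL
  rw [← Matrix.vecMul_vecMul, ← Matrix.vecMul_vecMul] at hWL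
  set w := (dβ ᵥ* L₀) ᵥ* B₁ ζβ with hw
  rw [hB₂ ζβ, Matrix.vecMul_add, Matrix.vecMul_one, aux_vecMul_smulMat,
    aux_vecMul_vecMulVec] at hWL
  set s : ℂ := ((z₂ - ζβ) / (ζβ - z₂)) / (b₂ ⬝ᵥ cβ) with hs
  have hw' : w = -(s • ((w ⬝ᵥ cβ) • b₂)) := eq_neg_of_add_eq_zero_left hWL
  refine ⟨-(s * (w ⬝ᵥ cβ)), ?_⟩
  conv_lhs => rw [hw']
  rw [smul_smul, neg_smul]
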